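/- Let r_e, r_i, r_k > 0 with r_e < min(r_i, r_k). Define d_max(k,i) = √(r_k² - r_e²) + √(r_i² - r_e²). Then d_max(k,i) is the maximum possible distance ‖x - y‖ over points x, y ∈ ℝ³ with ‖x‖ = r_k, ‖y‖ = r_i, subject to the segment from x to y not intersecting the open ball of radius r_e centered at the origin. -/

import Mathlib

open MeasureTheory ProbabilityTheory Real
open scoped ENNReal RealInnerProductSpace

noncomputable abbrev E3 : Type := EuclideanSpace ℝ (Fin 3)

/-- Uniform (normalized 2-dimensional Hausdorff) probability measure on the sphere
of radius `r` centered at the origin in `ℝ³`. -/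
noncomputable def sphereUniform (r : ℝ) : Measure E3 :=
  (μH[2] (Metric.sphere (0 : E3) r))⁻¹ •
    (μH[2] : Measure E3).restrict (Metric.sphere (0 : E3) r)

set_option maxHeartbeats 800000 in
theorem stmt_12 (re ri rk : ℝ) (hre : 0 < re) (hri : re < ri) (hrk : re < rk) :
    IsGreatest {d : ℝ | ∃ x y : E3, ‖x‖ = rk ∧ ‖y‖ = ri ∧
        (∀ z ∈ segment ℝ x y, z ∉ Metric.ball (0 : E3) re) ∧ d = ‖x - y‖}
      (Real.sqrt (rk ^ 2 - re ^ 2) + Real.sqrt (ri ^ 2 - re ^ 2)) := by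
  set a := Real.sqrt (rk ^ 2 - re ^ 2) with ha
  set b := Real.sqrt (ri ^ 2 - re ^ 2) with hb
  have ha0 : 0 < a := Real.sqrt_pos.mpr (by nlinarith)
  have hb0 : 0 < b := Real.sqrt_pos.mpr (by nlinarith)
  have ha2 : a ^ 2 = rk ^ 2 - re ^ 2 := Real.sq_sqrt (by nlinarith)
  have hb2 : b ^ 2 = ri ^ 2 - re ^ 2 := Real.sq_sqrt (by nlinarith)
  constructor
  · -- membership
    set u : E3 := EuclideanSpace.single (0 : Fin 3) (1 : ℝ) with hu
    set v : E3 := EuclideanSpace.single (1 : Fin 3) (1 : ℝ) with hv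
    have huu : ⟪u, u⟫ = 1 := by
      simp [hu, EuclideanSpace.inner_single_left, EuclideanSpace.single_apply]
    have hvv : ⟪v, v⟫ = 1 := by
      simp [hv, EuclideanSpace.inner_single_left, EuclideanSpace.single_apply]
    have huv : ⟪u, v⟫ = 0 := by
      simp [hu, hv, EuclideanSpace.inner_single_left, EuclideanSpace.single_apply]
    have hvu : ⟪v, u⟫ = 0 := by
      simp [hu, hv, EuclideanSpace.inner_single_left, EuclideanSpace.single_apply]
    have hnorm : ∀ p q : ℝ, ‖p • u + q • v‖ = Real.sqrt (p ^ 2 + q ^ 2) := by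
      intro p q
      rw [norm_eq_sqrt_real_inner]
      congr 1
      simp only [inner_add_left, inner_add_right, real_inner_smul_left,
        real_inner_smul_right, huu, hvv, huv, hvu]
      ring
    refine ⟨a • u + re • v, (-b) • u + re • v, ?_, ?_, ?_, ?_⟩
    · rw [hnorm, ha2]
      rw [show rk ^ 2 - re ^ 2 + re ^ 2 = rk ^ 2 by ring,
        Real.sqrt_sq (by linarith)]
    · rw [hnorm, neg_sq, hb2]
      rw [show ri ^ 2 - re ^ 2 + re ^ 2 = ri ^ 2 by ring,
        Real.sqrt_sq (by linarith)]
    · rintro z hz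
      rw [segment_eq_image] at hz
      obtain ⟨t, ht, rfl⟩ := hz
      simp only [Metric.mem_ball, dist_zero_right]
      push_neg
      have : (1 - t) • (a • u + re • v) + t • ((-b) • u + re • v)
          = ((1 - t) * a + t * (-b)) • u + re • v := by
        module
      rw [this, hnorm]
      calc re = Real.sqrt (re ^ 2) := (Real.sqrt_sq hre.le).symm
        _ ≤ _ := Real.sqrt_le_sqrt (by nlinarith)
    · have : a • u + re • v - ((-b) • u + re • v) = (a + b) • u + (0:ℝ) • v := by
        module
      rw [this, hnorm]
      rw [show (a+b)^2 + (0:ℝ)^2 = (a+b)^2 by ring, Real.sqrt_sq (by positivity)]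
  · -- upper bound
    rintro d ⟨x, y, hx, hy, hseg, rfl⟩
    set c : ℝ := ⟪x, y⟫ with hc
    have hseg' : ∀ t : ℝ, t ∈ Set.Icc (0:ℝ) 1 → re ≤ ‖(1 - t) • x + t • y‖ := by
      intro t ht
      have hz : (1 - t) • x + t • y ∈ segment ℝ x y :=
        ⟨1 - t, t, by linarith [ht.2], ht.1, by ring, rfl⟩
      have := hseg _ hz
      simp only [Metric.mem_ball, dist_zero_right] at this
      linarith [not_lt.mp this]
    have hexp : ∀ t : ℝ, ‖(1 - t) • x + t • y‖ ^ 2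
        = (1 - t) ^ 2 * rk ^ 2 + 2 * (1 - t) * t * c + t ^ 2 * ri ^ 2 := by
      intro t
      rw [norm_add_sq_real, norm_smul, norm_smul, real_inner_smul_left,
        real_inner_smul_right, hx, hy, Real.norm_eq_abs, Real.norm_eq_abs]
      rw [mul_pow, mul_pow, sq_abs, sq_abs]
      ring
    have key : re ^ 2 - a * b ≤ c := by
      by_cases hcr : re ^ 2 ≤ c
      · nlinarith
      · push_neg at hcr
        set A : ℝ := rk ^ 2 + ri ^ 2 - 2 * c with hA
        have hA0 : 0 < A := by nlinarith
        set t : ℝ := (rk ^ 2 - c) / A with htdef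
        have ht : t ∈ Set.Icc (0:ℝ) 1 := by
          constructor
          · apply div_nonneg (by nlinarith) hA0.le
          · rw [div_le_one hA0]; nlinarith
        have h1 := hseg' t ht
        have h2 : re ^ 2 ≤ ‖(1 - t) • x + t • y‖ ^ 2 := by
          have := norm_nonneg ((1 - t) • x + t • y)
          nlinarith
        rw [hexp] at h2
        have h1t : 1 - t = (ri ^ 2 - c) / A := by
          field_simp [htdef, hA]; rw [htdef, sub_mul, div_mul_cancel₀ _ hA0.ne', hA]; ring
        rw [h1t, htdef] at h2
        have h2' := mul_le_mul_of_nonneg_right h2 (sq_nonneg A)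
        have e : (((ri ^ 2 - c) / A) ^ 2 * rk ^ 2
            + 2 * ((ri ^ 2 - c) / A) * ((rk ^ 2 - c) / A) * c
            + ((rk ^ 2 - c) / A) ^ 2 * ri ^ 2) * A ^ 2
            = (rk ^ 2 * ri ^ 2 - c ^ 2) * A := by
          field_simp
          ring
        rw [e] at h2'
        have h5 : re ^ 2 * A ≤ rk ^ 2 * ri ^ 2 - c ^ 2 := by
          rw [← mul_le_mul_iff_of_pos_right hA0]
          nlinarith [h2']
        have h6 : (re ^ 2 - c) ^ 2 ≤ (a * b) ^ 2 := by nlinarith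
        nlinarith [mul_pos ha0 hb0, sq_nonneg (re ^ 2 - c - a * b)]
    -- conclude
    have hxy2 : ‖x - y‖ ^ 2 = rk ^ 2 + ri ^ 2 - 2 * c := by
      rw [norm_sub_sq_real, hx, hy]; ring
    have : ‖x - y‖ ^ 2 ≤ (a + b) ^ 2 := by nlinarith
    nlinarith [norm_nonneg (x - y), abs_le_abs (le_refl (a+b))]
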